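/- The space P_{1,a^2}(K) = {c ∈ K : Δ(c) = c⊗1 + a^2⊗c} of (1, a^2)-skew-primitive elements of K equals the two-dimensional linear span of 1 − a^2 and ba. -/

import Mathlib

open TensorProduct

noncomputable section

/-- Generators of the algebra `K`. -/
inductive KGen : Type
  | a | b

variable (k : Type) [Field k] (ξ : k)

/-- The defining relations of `K`: `a⁴ = 1`, `b² = 0`, `ba = ξ·ab`. -/
inductive KRel : FreeAlgebra k KGen → FreeAlgebra k KGen → Prop
  | a4 : KRel ((FreeAlgebra.ι k KGen.a) ^ 4) 1
  | b2 : KRel ((FreeAlgebra.ι k KGen.b) ^ 2) 0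
  | ba : KRel (FreeAlgebra.ι k KGen.b * FreeAlgebra.ι k KGen.a)
      (ξ • (FreeAlgebra.ι k KGen.a * FreeAlgebra.ι k KGen.b))

/-- The algebra `K`, the quotient of the free algebra on `a, b` by the relations. -/
abbrev KAlg : Type := RingQuot (KRel k ξ)

/-- The image of the generator `a` in `K`. -/
def aK : KAlg k ξ := RingQuot.mkAlgHom k (KRel k ξ) (FreeAlgebra.ι k KGen.a)

/-- The image of the generator `b` in `K`. -/
def bK : KAlg k ξ := RingQuot.mkAlgHom k (KRel k ξ) (FreeAlgebra.ι k KGen.b)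


lemma ha4 : aK k ξ ^ 4 = 1 := by
  have := RingQuot.mkAlgHom_rel k (KRel.a4 (k := k) (ξ := ξ))
  simpa [aK, map_pow] using this

lemma hb2 : bK k ξ * bK k ξ = 0 := by
  have := RingQuot.mkAlgHom_rel k (KRel.b2 (k := k) (ξ := ξ))
  simpa [bK, map_pow, pow_two] using this

lemma hba : bK k ξ * aK k ξ = ξ • (aK k ξ * bK k ξ) := by
  have := RingQuot.mkAlgHom_rel k (KRel.ba (k := k) (ξ := ξ))
  simpa [aK, bK, map_smul] using this

variable {k ξ}

lemma hxi0 (hξ : IsPrimitiveRoot ξ 4) : ξ ≠ 0 := by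
  intro h
  have h4 : ξ ^ 4 = 1 := hξ.pow_eq_one
  rw [h] at h4; norm_num at h4

lemma hxi2 (hξ : IsPrimitiveRoot ξ 4) : ξ ^ 2 = -1 := by
  have h4 : ξ ^ 4 = 1 := hξ.pow_eq_one
  have h2 : ξ ^ 2 ≠ 1 := hξ.pow_ne_one_of_pos_of_lt (by norm_num) (by norm_num)
  have hz : (ξ ^ 2 - 1) * (ξ ^ 2 + 1) = 0 := by linear_combination h4
  rcases mul_eq_zero.1 hz with h | h
  · exact absurd (by linear_combination h) h2
  · linear_combination h

lemma hinv (hξ : IsPrimitiveRoot ξ 4) : ξ⁻¹ = -ξ := by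
  have h2 := hxi2 hξ
  have : ξ * (-ξ) = 1 := by linear_combination -h2
  exact inv_eq_of_mul_eq_one_right this

lemma hab (hξ : IsPrimitiveRoot ξ 4) : aK k ξ * bK k ξ = ξ⁻¹ • (bK k ξ * aK k ξ) := by
  rw [hba, smul_smul, inv_mul_cancel₀ (hxi0 hξ), one_smul]

lemma hab' (hξ : IsPrimitiveRoot ξ 4) (x : KAlg k ξ) :
    aK k ξ * (bK k ξ * x) = ξ⁻¹ • (bK k ξ * (aK k ξ * x)) := by
  rw [← mul_assoc, hab hξ, smul_mul_assoc, mul_assoc]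

lemma hb2' (x : KAlg k ξ) : bK k ξ * (bK k ξ * x) = 0 := by
  rw [← mul_assoc, hb2, zero_mul]

lemma ha4' (x : KAlg k ξ) : aK k ξ * (aK k ξ * (aK k ξ * (aK k ξ * x))) = x := by
  have : aK k ξ * (aK k ξ * (aK k ξ * (aK k ξ * x))) = aK k ξ ^ 4 * x := by
    simp [pow_succ, mul_assoc]
  rw [this, ha4, one_mul]

lemma ha4'' : aK k ξ * (aK k ξ * (aK k ξ * aK k ξ)) = 1 := by
  have := ha4' (k := k) (ξ := ξ) 1
  simpa [mul_one] using this

lemma hxi3 (hξ : IsPrimitiveRoot ξ 4) : ξ ^ 3 = -ξ := by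
  have h2 := hxi2 hξ; linear_combination ξ * h2
lemma hxi4 (hξ : IsPrimitiveRoot ξ 4) : ξ ^ 4 = 1 := hξ.pow_eq_one
lemma hxi5 (hξ : IsPrimitiveRoot ξ 4) : ξ ^ 5 = ξ := by
  have h2 := hxi2 hξ; linear_combination (ξ^3 - ξ) * h2
lemma hxi6 (hξ : IsPrimitiveRoot ξ 4) : ξ ^ 6 = -1 := by
  have h2 := hxi2 hξ; linear_combination (ξ^4 - ξ^2 + 1) * h2
lemma hxi7 (hξ : IsPrimitiveRoot ξ 4) : ξ ^ 7 = -ξ := by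
  have h2 := hxi2 hξ; linear_combination (ξ^5 - ξ^3 + ξ) * h2
lemma hxi8 (hξ : IsPrimitiveRoot ξ 4) : ξ ^ 8 = 1 := by
  have h4 := hxi4 hξ; linear_combination (ξ^4 + 1) * h4

lemma Δa2 (hξ : IsPrimitiveRoot ξ 4)
    (Δ : KAlg k ξ →ₐ[k] KAlg k ξ ⊗[k] KAlg k ξ)
    (hΔa : Δ (aK k ξ) = aK k ξ ⊗ₜ aK k ξ + ξ⁻¹ • (bK k ξ ⊗ₜ (bK k ξ * aK k ξ ^ 2))) :
    Δ (aK k ξ ^ 2) = (aK k ξ ^ 2) ⊗ₜ (aK k ξ ^ 2) := by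
  rw [pow_two, map_mul, hΔa]
  simp only [mul_add, add_mul, smul_mul_assoc, mul_smul_comm,
    Algebra.TensorProduct.tmul_mul_tmul, tmul_smul, ← TensorProduct.smul_tmul', smul_smul,
    pow_two, mul_assoc, hab hξ, hab' hξ, hb2, hb2', ha4', ha4'', zero_mul, mul_zero, hinv hξ,
    TensorProduct.zero_tmul, TensorProduct.tmul_zero, smul_zero, add_zero, zero_add]
  have h2 := hxi2 hξ
  match_scalars
  · ring
  · linear_combination (-ξ) * h2


section
variable (hξ : IsPrimitiveRoot ξ 4)
    (Δ : KAlg k ξ →ₐ[k] KAlg k ξ ⊗[k] KAlg k ξ)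
    (hΔa : Δ (aK k ξ) = aK k ξ ⊗ₜ aK k ξ + ξ⁻¹ • (bK k ξ ⊗ₜ (bK k ξ * aK k ξ ^ 2)))
    (hΔb : Δ (bK k ξ) = bK k ξ ⊗ₜ (aK k ξ ^ 3) + aK k ξ ⊗ₜ bK k ξ)
include hξ hΔa

lemma Δa3 : Δ (aK k ξ ^ 3) = (aK k ξ ^ 3) ⊗ₜ (aK k ξ ^ 3)
    + ξ⁻¹ • ((bK k ξ * aK k ξ ^ 2) ⊗ₜ bK k ξ) := by
  have : (aK k ξ ^ 3) = aK k ξ ^ 2 * aK k ξ := pow_succ _ 2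
  rw [this, map_mul, Δa2 hξ Δ hΔa, hΔa]
  have h2 := hxi2 hξ
  simp only [mul_add, add_mul, smul_mul_assoc, mul_smul_comm,
    Algebra.TensorProduct.tmul_mul_tmul, tmul_smul, ← TensorProduct.smul_tmul', smul_smul,
    pow_succ, pow_zero, one_mul, mul_one, mul_assoc, hab hξ, hab' hξ, hb2, hb2', ha4', ha4'',
    zero_mul, mul_zero, hinv hξ,
    TensorProduct.zero_tmul, TensorProduct.tmul_zero, smul_zero, add_zero, zero_add]
  all_goals match_scalars
  all_goals ring_nf
  all_goals simp only [hxi2 hξ, hxi3 hξ, hxi4 hξ, hxi5 hξ, hxi6 hξ, hxi7 hξ, hxi8 hξ]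
  all_goals try ring1
  all_goals try norm_num

include hΔb

lemma Δba : Δ (bK k ξ * aK k ξ) =
    (bK k ξ * aK k ξ) ⊗ₜ 1 + (aK k ξ ^ 2) ⊗ₜ (bK k ξ * aK k ξ) := by
  rw [map_mul, hΔb, hΔa]
  have h2 := hxi2 hξ
  simp only [mul_add, add_mul, smul_mul_assoc, mul_smul_comm,
    Algebra.TensorProduct.tmul_mul_tmul, tmul_smul, ← TensorProduct.smul_tmul', smul_smul,
    pow_succ, pow_zero, one_mul, mul_one, mul_assoc, hab hξ, hab' hξ, hb2, hb2', ha4', ha4'',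
    zero_mul, mul_zero, hinv hξ,
    TensorProduct.zero_tmul, TensorProduct.tmul_zero, smul_zero, add_zero, zero_add]
  all_goals match_scalars
  all_goals ring_nf
  all_goals simp only [hxi2 hξ, hxi3 hξ, hxi4 hξ, hxi5 hξ, hxi6 hξ, hxi7 hξ, hxi8 hξ]
  all_goals try ring1
  all_goals try norm_num

lemma Δba2 : Δ (bK k ξ * aK k ξ ^ 2) =
    (bK k ξ * aK k ξ ^ 2) ⊗ₜ aK k ξ + (aK k ξ ^ 3) ⊗ₜ (bK k ξ * aK k ξ ^ 2) := by
  have : bK k ξ * aK k ξ ^ 2 = (bK k ξ * aK k ξ) * aK k ξ := by rw [pow_two, mul_assoc]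
  rw [this, map_mul, Δba hξ Δ hΔa hΔb, hΔa]
  have h2 := hxi2 hξ
  simp only [mul_add, add_mul, smul_mul_assoc, mul_smul_comm,
    Algebra.TensorProduct.tmul_mul_tmul, tmul_smul, ← TensorProduct.smul_tmul', smul_smul,
    pow_succ, pow_zero, one_mul, mul_one, mul_assoc, hab hξ, hab' hξ, hb2, hb2', ha4', ha4'',
    zero_mul, mul_zero, hinv hξ,
    TensorProduct.zero_tmul, TensorProduct.tmul_zero, smul_zero, add_zero, zero_add]
  all_goals match_scalars
  all_goals ring_nf
  all_goals simp only [hxi2 hξ, hxi3 hξ, hxi4 hξ, hxi5 hξ, hxi6 hξ, hxi7 hξ, hxi8 hξ]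
  all_goals try ring1
  all_goals try norm_num

lemma Δba3 : Δ (bK k ξ * aK k ξ ^ 3) =
    (bK k ξ * aK k ξ ^ 3) ⊗ₜ (aK k ξ ^ 2) + 1 ⊗ₜ (bK k ξ * aK k ξ ^ 3) := by
  have : bK k ξ * aK k ξ ^ 3 = (bK k ξ * aK k ξ ^ 2) * aK k ξ := by rw [pow_succ, mul_assoc]
  rw [this, map_mul, Δba2 hξ Δ hΔa hΔb, hΔa]
  have h2 := hxi2 hξ
  simp only [mul_add, add_mul, smul_mul_assoc, mul_smul_comm,
    Algebra.TensorProduct.tmul_mul_tmul, tmul_smul, ← TensorProduct.smul_tmul', smul_smul,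
    pow_succ, pow_zero, one_mul, mul_one, mul_assoc, hab hξ, hab' hξ, hb2, hb2', ha4', ha4'',
    zero_mul, mul_zero, hinv hξ,
    TensorProduct.zero_tmul, TensorProduct.tmul_zero, smul_zero, add_zero, zero_add]
  all_goals match_scalars
  all_goals ring_nf
  all_goals simp only [hxi2 hξ, hxi3 hξ, hxi4 hξ, hxi5 hξ, hxi6 hξ, hxi7 hξ, hxi8 hξ]
  all_goals try ring1
  all_goals try norm_num

end

/-! ### A faithful enough representation -/

variable (k ξ) in
def mK : Fin 2 × Fin 4 → KAlg k ξ := fun p => bK k ξ ^ (p.1 : ℕ) * aK k ξ ^ (p.2 : ℕ)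

variable (k ξ) in
abbrev VV := (Fin 2 × Fin 4) → k

variable (k ξ) in
def Amap : VV k →ₗ[k] VV k where
  toFun f p := ξ⁻¹ ^ (p.1 : ℕ) * f (p.1, p.2 - 1)
  map_add' f g := by funext p; simp [mul_add]
  map_smul' c f := by funext p; simp [smul_eq_mul]; ring

variable (k) in
def Bmap : VV k →ₗ[k] VV k where
  toFun f p := if p.1 = 1 then f (0, p.2) else 0
  map_add' f g := by funext p; by_cases h : p.1 = 1 <;> simp [h]
  map_smul' c f := by funext p; by_cases h : p.1 = 1 <;> simp [h]

lemma Amap_pow4 (hξ : IsPrimitiveRoot ξ 4) : (Amap k ξ) ^ 4 = 1 := by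
  have h0 : ξ ≠ 0 := hxi0 hξ
  have h4 : ξ⁻¹ * ξ⁻¹ * ξ⁻¹ * ξ⁻¹ = 1 := by
    field_simp
    linear_combination -(hxi4 hξ)
  apply LinearMap.ext; intro f; funext ⟨j, i⟩
  have hi : i - 1 - 1 - 1 - 1 = i := by
    revert i; decide
  simp only [pow_succ, pow_zero, one_mul, Module.End.mul_apply, Module.End.one_apply, Amap,
    LinearMap.coe_mk, AddHom.coe_mk]
  rw [hi]
  fin_cases j <;> simp [← mul_assoc, h4]

lemma Bmap_sq : (Bmap k) * (Bmap k) = 0 := by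
  apply LinearMap.ext; intro f; funext ⟨j, i⟩
  fin_cases j <;> simp [Bmap, Module.End.mul_apply]

lemma BAmap (hξ : IsPrimitiveRoot ξ 4) :
    Bmap k * Amap k ξ = ξ • (Amap k ξ * Bmap k) := by
  have h0 : ξ ≠ 0 := hxi0 hξ
  apply LinearMap.ext; intro f; funext ⟨j, i⟩
  fin_cases j <;>
    simp [Bmap, Amap, Module.End.mul_apply, mul_inv_cancel₀ h0, ← mul_assoc]

variable (k ξ) in
def freeρ : FreeAlgebra k KGen →ₐ[k] Module.End k (VV k) :=
  FreeAlgebra.lift k (fun g => match g with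
    | KGen.a => Amap k ξ
    | KGen.b => Bmap k)

lemma freeρ_rel (hξ : IsPrimitiveRoot ξ 4) :
    ∀ ⦃x y : FreeAlgebra k KGen⦄, KRel k ξ x y → freeρ k ξ x = freeρ k ξ y := by
  intro x y h
  cases h with
  | a4 => simpa [freeρ] using Amap_pow4 hξ
  | b2 => simpa [freeρ, pow_two] using Bmap_sq (k := k)
  | ba => simpa [freeρ] using BAmap hξ

variable (k ξ) in
def ρK (hξ : IsPrimitiveRoot ξ 4) : KAlg k ξ →ₐ[k] Module.End k (VV k) :=
  RingQuot.liftAlgHom k ⟨freeρ k ξ, freeρ_rel hξ⟩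

lemma ρK_a (hξ : IsPrimitiveRoot ξ 4) : ρK k ξ hξ (aK k ξ) = Amap k ξ := by
  simp [ρK, aK, RingQuot.liftAlgHom_mkAlgHom_apply, freeρ]

lemma ρK_b (hξ : IsPrimitiveRoot ξ 4) : ρK k ξ hξ (bK k ξ) = Bmap k := by
  simp [ρK, bK, RingQuot.liftAlgHom_mkAlgHom_apply, freeρ]

variable (k ξ) in
def e00 : VV k := Pi.single ((0 : Fin 2), (0 : Fin 4)) 1

variable (k ξ) in
def fK (hξ : IsPrimitiveRoot ξ 4) : KAlg k ξ →ₗ[k] VV k where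
  toFun x := ρK k ξ hξ x (e00 k)
  map_add' x y := by simp [map_add]
  map_smul' c x := by simp [map_smul]

lemma Amap_single (i : Fin 4) :
    Amap k ξ (Pi.single ((0 : Fin 2), i) 1) = Pi.single ((0 : Fin 2), i + 1) 1 := by
  funext ⟨j, i'⟩
  fin_cases j <;>
    simp [Amap, Pi.single_apply, Prod.ext_iff, sub_eq_iff_eq_add]

lemma Bmap_single0 (i : Fin 4) :
    Bmap k (Pi.single ((0 : Fin 2), i) 1) = Pi.single ((1 : Fin 2), i) 1 := by
  funext ⟨j, i'⟩
  fin_cases j <;> simp [Bmap, Pi.single_apply, Prod.ext_iff]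

lemma Bmap_single1 (i : Fin 4) :
    Bmap k (Pi.single ((1 : Fin 2), i) 1) = 0 := by
  funext ⟨j, i'⟩
  fin_cases j <;> simp [Bmap, Pi.single_apply, Prod.ext_iff]

open Fin.NatCast in
lemma Apow_e00_n (n : ℕ) :
    (Amap k ξ ^ n) (e00 k) = Pi.single ((0 : Fin 2), (n : Fin 4)) 1 := by
  induction n with
  | zero => simp [e00]
  | succ n ih =>
      rw [pow_succ', Module.End.mul_apply, ih, Amap_single]
      push_cast
      rfl

lemma Apow_e00 (i : Fin 4) :
    (Amap k ξ ^ (i : ℕ)) (e00 k) = Pi.single ((0 : Fin 2), i) 1 := by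
  rw [Apow_e00_n, Fin.cast_val_eq_self]

lemma fK_mK (hξ : IsPrimitiveRoot ξ 4) (p : Fin 2 × Fin 4) :
    fK k ξ hξ (mK k ξ p) = Pi.single p 1 := by
  obtain ⟨j, i⟩ := p
  have : fK k ξ hξ (mK k ξ (j, i)) =
      ((Bmap k) ^ (j : ℕ)) ((Amap k ξ ^ (i : ℕ)) (e00 k)) := by
    simp [fK, mK, map_mul, map_pow, ρK_a hξ, ρK_b hξ, Module.End.mul_apply]
  rw [this, Apow_e00]
  fin_cases j
  · simp
  · simpa using Bmap_single0 (k := k) i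

lemma mK_indep (hξ : IsPrimitiveRoot ξ 4) : LinearIndependent k (mK k ξ) := by
  apply LinearIndependent.of_comp (fK k ξ hξ)
  have he : ⇑(fK k ξ hξ) ∘ mK k ξ = fun p => Pi.single p 1 := by
    funext p; simp [fK_mK hξ]
  have he2 : (fun p : Fin 2 × Fin 4 => Pi.single p (1 : k)) =
      ⇑(Pi.basisFun k (Fin 2 × Fin 4)) := by
    funext p; rw [Pi.basisFun_apply]
  rw [he, he2]
  exact (Pi.basisFun k (Fin 2 × Fin 4)).linearIndependent

/-! ### Spanning -/

lemma apow_mod (n : ℕ) : aK k ξ ^ n = aK k ξ ^ (n % 4) := by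
  conv_lhs => rw [← Nat.div_add_mod n 4]
  rw [pow_add, pow_mul, ha4, one_pow, one_mul]

lemma apow_b (hξ : IsPrimitiveRoot ξ 4) (n : ℕ) :
    aK k ξ ^ n * bK k ξ = ξ⁻¹ ^ n • (bK k ξ * aK k ξ ^ n) := by
  induction n with
  | zero => simp
  | succ n ih =>
      rw [pow_succ', mul_assoc, ih, mul_smul_comm, ← mul_assoc, hab hξ, pow_succ']
      rw [smul_mul_assoc, smul_smul, mul_assoc]
      ring_nf

variable (k ξ) in
def SK : Submodule k (KAlg k ξ) := Submodule.span k (Set.range (mK k ξ))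

open Fin.NatCast in
lemma aK_pow_mul_mem (j : Fin 2) (n m' : ℕ) :
    bK k ξ ^ (j : ℕ) * (aK k ξ ^ n * aK k ξ ^ m') ∈ SK k ξ := by
  rw [← pow_add, apow_mod]
  have : aK k ξ ^ ((n + m') % 4) = aK k ξ ^ (((((n + m') % 4 : ℕ) : Fin 4)) : ℕ) := by
    congr 1
    rw [Fin.val_natCast]
    omega
  rw [this]
  exact Submodule.subset_span ⟨(j, (((n + m') % 4 : ℕ) : Fin 4)), rfl⟩

lemma mmul (hξ : IsPrimitiveRoot ξ 4) (p q : Fin 2 × Fin 4) :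
    mK k ξ p * mK k ξ q ∈ SK k ξ := by
  obtain ⟨j, i⟩ := p; obtain ⟨j', i'⟩ := q
  unfold mK
  fin_cases j' <;> fin_cases j
  · -- j = 0, j' = 0
    simpa using aK_pow_mul_mem (0 : Fin 2) (i : ℕ) (i' : ℕ)
  · -- j = 1, j' = 0
    simp only [Fin.isValue, Fin.val_one, pow_one, Fin.val_zero, pow_zero, one_mul, mul_assoc]
    simpa using aK_pow_mul_mem (1 : Fin 2) (i : ℕ) (i' : ℕ)
  · -- j = 0, j' = 1
    simp only [Fin.isValue, Fin.val_zero, pow_zero, one_mul, Fin.val_one, pow_one]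
    rw [← mul_assoc, apow_b hξ, smul_mul_assoc, mul_assoc]
    exact Submodule.smul_mem _ _ (by simpa using aK_pow_mul_mem (1 : Fin 2) (i : ℕ) (i' : ℕ))
  · -- j = 1, j' = 1
    simp only [Fin.isValue, Fin.val_one, pow_one]
    have : bK k ξ * aK k ξ ^ (i : ℕ) * (bK k ξ * aK k ξ ^ (i' : ℕ)) = 0 := by
      rw [mul_assoc, ← mul_assoc (aK k ξ ^ (i : ℕ)), apow_b hξ, smul_mul_assoc,
        mul_smul_comm, ← mul_assoc, ← mul_assoc, hb2, zero_mul, zero_mul, smul_zero]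
    rw [this]
    exact Submodule.zero_mem _

lemma SK_mul_closed (hξ : IsPrimitiveRoot ξ 4) {x y : KAlg k ξ}
    (hx : x ∈ SK k ξ) (hy : y ∈ SK k ξ) : x * y ∈ SK k ξ := by
  induction hy using Submodule.span_induction with
  | mem y hym =>
      obtain ⟨q, rfl⟩ := hym
      induction hx using Submodule.span_induction with
      | mem x hxm => obtain ⟨p, rfl⟩ := hxm; exact mmul hξ p q
      | zero => rw [zero_mul]; exact Submodule.zero_mem _
      | add u v _ _ hu hv => rw [add_mul]; exact Submodule.add_mem _ hu hv
      | smul c u _ hu => rw [smul_mul_assoc]; exact Submodule.smul_mem _ _ hu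
  | zero => rw [mul_zero]; exact Submodule.zero_mem _
  | add u v _ _ hu hv => rw [mul_add]; exact Submodule.add_mem _ hu hv
  | smul c u _ hu => rw [mul_smul_comm]; exact Submodule.smul_mem _ _ hu

lemma one_mem_SK : (1 : KAlg k ξ) ∈ SK k ξ := by
  have : mK k ξ (0, 0) = 1 := by simp [mK]
  rw [← this]
  exact Submodule.subset_span ⟨(0, 0), rfl⟩

lemma SK_top (hξ : IsPrimitiveRoot ξ 4) : ⊤ ≤ SK k ξ := by
  intro x _
  obtain ⟨y, rfl⟩ := RingQuot.mkAlgHom_surjective k (KRel k ξ) x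
  induction y using FreeAlgebra.induction with
  | grade0 r =>
      rw [AlgHom.commutes, Algebra.algebraMap_eq_smul_one]
      exact Submodule.smul_mem _ _ one_mem_SK
  | grade1 g =>
      cases g with
      | a =>
          have : mK k ξ (0, 1) = RingQuot.mkAlgHom k (KRel k ξ) (FreeAlgebra.ι k KGen.a) := by
            simp [mK, aK]
          rw [← this]
          exact Submodule.subset_span ⟨(0, 1), rfl⟩
      | b =>
          have : mK k ξ (1, 0) = RingQuot.mkAlgHom k (KRel k ξ) (FreeAlgebra.ι k KGen.b) := by
            simp [mK, bK]
          rw [← this]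
          exact Submodule.subset_span ⟨(1, 0), rfl⟩
  | mul u v hu hv => rw [map_mul]; exact SK_mul_closed hξ (hu trivial) (hv trivial)
  | add u v hu hv => rw [map_add]; exact Submodule.add_mem _ (hu trivial) (hv trivial)

variable (k ξ) in
def KB (hξ : IsPrimitiveRoot ξ 4) : Module.Basis (Fin 2 × Fin 4) k (KAlg k ξ) :=
  Module.Basis.mk (mK_indep hξ) (SK_top hξ)

lemma KB_apply (hξ : IsPrimitiveRoot ξ 4) (p : Fin 2 × Fin 4) :
    KB k ξ hξ p = mK k ξ p := Module.Basis.mk_apply _ _ _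

/-! ### Δ on the basis monomials -/

lemma mK0 (i : Fin 4) : mK k ξ (0, i) = aK k ξ ^ (i : ℕ) := by simp [mK]
lemma mK1 (i : Fin 4) : mK k ξ (1, i) = bK k ξ * aK k ξ ^ (i : ℕ) := by simp [mK]

lemma mKe0 : mK k ξ (0, 0) = 1 := by simp [mK]
lemma mKe1 : mK k ξ (0, 1) = aK k ξ := by simp [mK]
lemma mKe2 : mK k ξ (0, 2) = aK k ξ ^ 2 := by simp [mK]
lemma mKe3 : mK k ξ (0, 3) = aK k ξ ^ 3 := by simp [mK]
lemma mKf0 : mK k ξ (1, 0) = bK k ξ := by simp [mK]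
lemma mKf1 : mK k ξ (1, 1) = bK k ξ * aK k ξ := by simp [mK]
lemma mKf2 : mK k ξ (1, 2) = bK k ξ * aK k ξ ^ 2 := by simp [mK]
lemma mKf3 : mK k ξ (1, 3) = bK k ξ * aK k ξ ^ 3 := by simp [mK]

section
variable (hξ : IsPrimitiveRoot ξ 4)
    (Δ : KAlg k ξ →ₐ[k] KAlg k ξ ⊗[k] KAlg k ξ)
    (hΔa : Δ (aK k ξ) = aK k ξ ⊗ₜ aK k ξ + ξ⁻¹ • (bK k ξ ⊗ₜ (bK k ξ * aK k ξ ^ 2)))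
    (hΔb : Δ (bK k ξ) = bK k ξ ⊗ₜ (aK k ξ ^ 3) + aK k ξ ⊗ₜ bK k ξ)
include hξ hΔa hΔb

lemma Δm00 : Δ (mK k ξ (0, 0)) = mK k ξ (0, 0) ⊗ₜ mK k ξ (0, 0) := by
  rw [mKe0, map_one, Algebra.TensorProduct.one_def]

lemma Δm01 : Δ (mK k ξ (0, 1)) =
    mK k ξ (0, 1) ⊗ₜ mK k ξ (0, 1) + ξ⁻¹ • (mK k ξ (1, 0) ⊗ₜ mK k ξ (1, 2)) := by
  rw [mKe1, mKf0, mKf2]; exact hΔa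

lemma Δm02 : Δ (mK k ξ (0, 2)) = mK k ξ (0, 2) ⊗ₜ mK k ξ (0, 2) := by
  rw [mKe2]; exact Δa2 hξ Δ hΔa

lemma Δm03 : Δ (mK k ξ (0, 3)) =
    mK k ξ (0, 3) ⊗ₜ mK k ξ (0, 3) + ξ⁻¹ • (mK k ξ (1, 2) ⊗ₜ mK k ξ (1, 0)) := by
  rw [mKe3, mKf2, mKf0]; exact Δa3 hξ Δ hΔa

lemma Δm10 : Δ (mK k ξ (1, 0)) =
    mK k ξ (1, 0) ⊗ₜ mK k ξ (0, 3) + mK k ξ (0, 1) ⊗ₜ mK k ξ (1, 0) := by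
  rw [mKf0, mKe3, mKe1]; exact hΔb

lemma Δm11 : Δ (mK k ξ (1, 1)) =
    mK k ξ (1, 1) ⊗ₜ mK k ξ (0, 0) + mK k ξ (0, 2) ⊗ₜ mK k ξ (1, 1) := by
  rw [mKf1, mKe0, mKe2]; exact Δba hξ Δ hΔa hΔb

lemma Δm12 : Δ (mK k ξ (1, 2)) =
    mK k ξ (1, 2) ⊗ₜ mK k ξ (0, 1) + mK k ξ (0, 3) ⊗ₜ mK k ξ (1, 2) := by
  rw [mKf2, mKe1, mKe3]; exact Δba2 hξ Δ hΔa hΔb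

lemma Δm13 : Δ (mK k ξ (1, 3)) =
    mK k ξ (1, 3) ⊗ₜ mK k ξ (0, 2) + mK k ξ (0, 0) ⊗ₜ mK k ξ (1, 3) := by
  rw [mKf3, mKe2, mKe0]; exact Δba3 hξ Δ hΔa hΔb

end

lemma Drepr (hξ : IsPrimitiveRoot ξ 4) (p q : Fin 2 × Fin 4)
    (idx : (Fin 2 × Fin 4) × (Fin 2 × Fin 4)) :
    ((KB k ξ hξ).tensorProduct (KB k ξ hξ)).repr (mK k ξ p ⊗ₜ mK k ξ q) idx
      = if (p, q) = idx then 1 else 0 := by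
  rw [← KB_apply hξ p, ← KB_apply hξ q, ← Module.Basis.tensorProduct_apply, Module.Basis.repr_self]
  exact Finsupp.single_apply

section
variable (hξ : IsPrimitiveRoot ξ 4)
    (Δ : KAlg k ξ →ₐ[k] KAlg k ξ ⊗[k] KAlg k ξ)
    (hΔa : Δ (aK k ξ) = aK k ξ ⊗ₜ aK k ξ + ξ⁻¹ • (bK k ξ ⊗ₜ (bK k ξ * aK k ξ ^ 2)))
    (hΔb : Δ (bK k ξ) = bK k ξ ⊗ₜ (aK k ξ ^ 3) + aK k ξ ⊗ₜ bK k ξ)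
include hξ hΔa hΔb

lemma forward {c : KAlg k ξ}
    (hc : Δ c = c ⊗ₜ 1 + (aK k ξ ^ 2) ⊗ₜ c) :
    c ∈ Submodule.span k {1 - aK k ξ ^ 2, bK k ξ * aK k ξ} := by
  classical
  obtain ⟨γ, hrep⟩ : ∃ γ : Fin 2 × Fin 4 → k,
      (∑ p : Fin 2 × Fin 4, γ p • mK k ξ p) = c := by
    refine ⟨fun p => (KB k ξ hξ).repr c p, ?_⟩
    have := (KB k ξ hξ).sum_repr c
    simpa only [KB_apply hξ] using this
  rw [← hrep] at hc
  rw [map_sum] at hc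
  simp only [map_smul, TensorProduct.sum_tmul, TensorProduct.tmul_sum,
    ← TensorProduct.smul_tmul', TensorProduct.tmul_smul] at hc
  simp only [← mKe0 (k := k) (ξ := ξ), ← mKe2 (k := k) (ξ := ξ)] at hc
  have hco : ∀ idx : (Fin 2 × Fin 4) × (Fin 2 × Fin 4),
      (∑ p : Fin 2 × Fin 4,
        γ p * ((KB k ξ hξ).tensorProduct (KB k ξ hξ)).repr (Δ (mK k ξ p)) idx)
      = (∑ p : Fin 2 × Fin 4,
          γ p * ((KB k ξ hξ).tensorProduct (KB k ξ hξ)).repr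
            (mK k ξ p ⊗ₜ mK k ξ (0, 0)) idx)
        + ∑ p : Fin 2 × Fin 4,
          γ p * ((KB k ξ hξ).tensorProduct (KB k ξ hξ)).repr
            (mK k ξ (0, 2) ⊗ₜ mK k ξ p) idx := by
    intro idx
    have h := congrArg (fun z => (((KB k ξ hξ).tensorProduct (KB k ξ hξ)).repr z) idx) hc
    simpa only [map_sum, map_add, map_smul, Finsupp.coe_finset_sum, Finset.sum_apply,
      Finsupp.coe_add, Pi.add_apply, Finsupp.coe_smul, Pi.smul_apply, smul_eq_mul] using h
  have h1 := hco ((0, 1), (0, 1))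
  have h2 := hco ((0, 3), (0, 3))
  have h3 := hco ((0, 1), (1, 0))
  have h4 := hco ((1, 2), (0, 1))
  have h5 := hco ((1, 3), (0, 2))
  have h6 := hco ((0, 2), (0, 0))
  simp only [Fintype.sum_prod_type, Fin.sum_univ_two, Fin.sum_univ_four,
    Δm00 hξ Δ hΔa hΔb, Δm01 hξ Δ hΔa hΔb, Δm02 hξ Δ hΔa hΔb, Δm03 hξ Δ hΔa hΔb,
    Δm10 hξ Δ hΔa hΔb, Δm11 hξ Δ hΔa hΔb, Δm12 hξ Δ hΔa hΔb, Δm13 hξ Δ hΔa hΔb,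
    map_add, map_smul, Finsupp.coe_add, Pi.add_apply, Finsupp.coe_smul, Pi.smul_apply,
    smul_eq_mul, Drepr hξ, Prod.mk.injEq] at h1 h2 h3 h4 h5 h6
  simp at h1 h2 h3 h4 h5 h6
  rw [Submodule.mem_span_pair]
  refine ⟨γ 0, γ (1, 1), ?_⟩
  rw [← hrep]
  simp only [Fintype.sum_prod_type, Fin.sum_univ_two, Fin.sum_univ_four]
  rw [mKe0, mKe1, mKe2, mKe3, mKf0, mKf1, mKf2, mKf3]
  rw [h1, h2, h3, h4, h5]
  have h02 : γ (0, 2) = -γ 0 := by linear_combination -h6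
  rw [h02]
  simp only [show ((0, 0) : Fin 2 × Fin 4) = 0 from rfl]
  module

lemma reverse {c : KAlg k ξ}
    (hm : c ∈ Submodule.span k {1 - aK k ξ ^ 2, bK k ξ * aK k ξ}) :
    Δ c = c ⊗ₜ 1 + (aK k ξ ^ 2) ⊗ₜ c := by
  induction hm using Submodule.span_induction with
  | mem x hx =>
      rcases hx with rfl | rfl
      · rw [map_sub, map_one, Δa2 hξ Δ hΔa, Algebra.TensorProduct.one_def]
        rw [TensorProduct.sub_tmul, TensorProduct.tmul_sub]
        abel
      · exact Δba hξ Δ hΔa hΔb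
  | zero => simp
  | add x y _ _ hx hy =>
      rw [map_add, hx, hy, TensorProduct.add_tmul, TensorProduct.tmul_add]
      abel
  | smul a x _ hx =>
      rw [map_smul, hx, smul_add, TensorProduct.smul_tmul', TensorProduct.tmul_smul]

end

lemma KBrepr (hξ : IsPrimitiveRoot ξ 4) (p idx : Fin 2 × Fin 4) :
    (KB k ξ hξ).repr (mK k ξ p) idx = if p = idx then 1 else 0 := by
  rw [← KB_apply hξ, Module.Basis.repr_self]
  exact Finsupp.single_apply


/-- The space `P_{1,a²}(K) = {c ∈ K : Δ(c) = c⊗1 + a²⊗c}` of `(1,a²)`-skew-primitive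
elements of `K` equals the two-dimensional linear span of `1 − a²` and `ba`. -/
theorem stmt_3 (k : Type) [Field k] [IsAlgClosed k] [CharZero k] (ξ : k)
    (hξ : IsPrimitiveRoot ξ 4)
    (Δ : KAlg k ξ →ₐ[k] KAlg k ξ ⊗[k] KAlg k ξ)
    (hΔa : Δ (aK k ξ) = aK k ξ ⊗ₜ aK k ξ + ξ⁻¹ • (bK k ξ ⊗ₜ (bK k ξ * aK k ξ ^ 2)))
    (hΔb : Δ (bK k ξ) = bK k ξ ⊗ₜ (aK k ξ ^ 3) + aK k ξ ⊗ₜ bK k ξ) :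
    {c : KAlg k ξ | Δ c = c ⊗ₜ 1 + (aK k ξ ^ 2) ⊗ₜ c} =
      (Submodule.span k {1 - aK k ξ ^ 2, bK k ξ * aK k ξ} : Set (KAlg k ξ)) ∧
    Module.finrank k
      (Submodule.span k {1 - aK k ξ ^ 2, bK k ξ * aK k ξ} : Submodule k (KAlg k ξ)) = 2 := by
  constructor
  · ext c
    simp only [Set.mem_setOf_eq, SetLike.mem_coe]
    exact ⟨fun h => forward hξ Δ hΔa hΔb h, fun h => reverse hξ Δ hΔa hΔb h⟩
  · have hpair : LinearIndependent k ![1 - aK k ξ ^ 2, bK k ξ * aK k ξ] := by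
      rw [LinearIndependent.pair_iff]
      intro s t hst
      have hst' : s • (mK k ξ (0, 0) - mK k ξ (0, 2)) + t • mK k ξ (1, 1) = 0 := by
        rw [mKe0, mKe2, mKf1]; exact hst
      have h1 := congrArg (fun z => ((KB k ξ hξ).repr z) (0, 0)) hst'
      have h2 := congrArg (fun z => ((KB k ξ hξ).repr z) (1, 1)) hst'
      simp only [map_add, map_sub, map_smul, map_zero, Finsupp.coe_add, Finsupp.coe_sub,
        Finsupp.coe_smul, Finsupp.coe_zero, Pi.add_apply, Pi.sub_apply, Pi.smul_apply,
        Pi.zero_apply, smul_eq_mul, KBrepr hξ] at h1 h2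
      simp at h1 h2
      exact ⟨h1, h2⟩
    have hfr := finrank_span_eq_card hpair
    have hr : Set.range ![1 - aK k ξ ^ 2, bK k ξ * aK k ξ]
        = {1 - aK k ξ ^ 2, bK k ξ * aK k ξ} := by
      ext x
      simp only [Matrix.range_cons, Matrix.range_empty, Set.union_empty, Set.union_singleton,
        Set.mem_insert_iff, Set.mem_singleton_iff]
      tauto
    rw [hr] at hfr
    simpa using hfr

end
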